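/- Let q and p be coprime positive integers and φ an integer with φ^p ≡ 1 (mod q). Then the group Z_q ⋊_φ Z_p is effectively cyclic: for every pair of commuting elements g, h of Z_q ⋊_φ Z_p there exists a cyclic subgroup containing both g and h. -/

import Mathlib

/-- Let `q`, `p` be coprime positive integers and `φ` an integer with `φ ^ p ≡ 1 (mod q)`.
The group `Z_q ⋊_φ Z_p` (here characterized abstractly: a group of order `q * p` generated
by elements `a`, `A` with `orderOf a = q`, `orderOf A = p` and `A * a * A⁻¹ = a ^ φ`;
since the orders of `a` and `A` are coprime and `|G| = q * p`, every element of `G` is of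
the form `a ^ i * A ^ I`, so these data pin down the semidirect product) is effectively
cyclic: any two commuting elements lie in a common cyclic subgroup. -/
theorem semidirect_product_effectively_cyclic
    (q p : ℕ) (hq : 0 < q) (hp : 0 < p) (hqp : Nat.Coprime q p)
    (φ : ℤ) (hφ : φ ^ p ≡ 1 [ZMOD (q : ℤ)])
    (G : Type*) [Group G] [Fintype G] (a A : G)
    (hcard : Fintype.card G = q * p)
    (ha : orderOf a = q) (hA : orderOf A = p)
    (hrel : A * a * A⁻¹ = a ^ φ) :
    ∀ g h : G, g * h = h * g → ∃ C : Subgroup G, IsCyclic ↥C ∧ g ∈ C ∧ h ∈ C := by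
  classical
  intro g h hgh
  have hcard' : Nat.card G = q * p := by rw [Nat.card_eq_fintype_card, hcard]
  set N : Subgroup G := Subgroup.zpowers a with hNdef
  have hcardN : Nat.card N = q := by rw [Nat.card_zpowers, ha]
  have hAp : A ^ p = 1 := by rw [← hA]; exact pow_orderOf_eq_one A
  -- N is cyclic
  haveI hNcyc : IsCyclic N := by
    refine ⟨⟨⟨a, Subgroup.mem_zpowers a⟩, ?_⟩⟩
    rintro ⟨x, hx⟩
    obtain ⟨k, hk⟩ := Subgroup.mem_zpowers_iff.mp hx
    exact ⟨k, Subtype.ext (by simpa using hk)⟩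
  -- conjugation by A on powers of a
  have hconj : ∀ n : ℤ, A * a ^ n * A⁻¹ = a ^ (φ * n) := by
    intro n
    have : (MulAut.conj A) (a ^ n) = ((MulAut.conj A) a) ^ n := map_zpow _ _ _
    simp only [MulAut.conj_apply] at this
    rw [this, hrel, ← zpow_mul, mul_comm]
  -- iterated conjugation
  have hconjk : ∀ k : ℕ, ∀ n : ℤ, A ^ k * a ^ n * (A ^ k)⁻¹ = a ^ (φ ^ k * n) := by
    intro k
    induction k with
    | zero => intro n; simp
    | succ k ih =>
      intro n
      have : A ^ (k + 1) * a ^ n * (A ^ (k + 1))⁻¹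
          = A * (A ^ k * a ^ n * (A ^ k)⁻¹) * A⁻¹ := by
        rw [pow_succ']
        group
      rw [this, ih, hconj]
      congr 1
      ring
  -- conjugation by A⁻¹ on powers of a
  have hAinv : A⁻¹ = A ^ (p - 1) :=
    inv_eq_of_mul_eq_one_right (by rw [← pow_succ', Nat.sub_add_cancel hp, hAp])
  have hconjinv : ∀ n : ℤ, A⁻¹ * a ^ n * A ∈ N := by
    intro n
    have : A⁻¹ * a ^ n * A = A ^ (p - 1) * a ^ n * (A ^ (p - 1))⁻¹ := by
      rw [← hAinv, inv_inv]
    rw [this, hconjk]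
    exact Subgroup.zpow_mem _ (Subgroup.mem_zpowers a) _
  -- A normalizes N
  have hAmem : A ∈ Subgroup.normalizer (N : Set G) := by
    rw [Subgroup.mem_normalizer_iff]
    intro x
    constructor
    · intro hx
      obtain ⟨k, hk⟩ := Subgroup.mem_zpowers_iff.mp hx
      rw [← hk, hconj]
      exact Subgroup.zpow_mem _ (Subgroup.mem_zpowers a) _
    · intro hx
      obtain ⟨k, hk⟩ := Subgroup.mem_zpowers_iff.mp hx
      have : x = A⁻¹ * a ^ k * A := by rw [hk]; group
      rw [this]
      exact hconjinv k
  -- G is generated by a and A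
  have htop : Subgroup.closure {a, A} = ⊤ := by
    set T := Subgroup.closure ({a, A} : Set G) with hT
    have haT : a ∈ T := Subgroup.subset_closure (by simp)
    have hAT : A ∈ T := Subgroup.subset_closure (by simp)
    have hqdvd : q ∣ Nat.card T := by
      have : orderOf (⟨a, haT⟩ : T) = q := by rw [Subgroup.orderOf_mk, ha]
      rw [← this]; exact orderOf_dvd_natCard _
    have hpdvd : p ∣ Nat.card T := by
      have : orderOf (⟨A, hAT⟩ : T) = p := by rw [Subgroup.orderOf_mk, hA]
      rw [← this]; exact orderOf_dvd_natCard _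
    have hqp_dvd : q * p ∣ Nat.card T := Nat.Coprime.mul_dvd_of_dvd_of_dvd hqp hqdvd hpdvd
    have hle : Nat.card T ∣ q * p := hcard' ▸ Subgroup.card_subgroup_dvd_card T
    have hTcard : Nat.card T = q * p := Nat.dvd_antisymm hle hqp_dvd
    exact Subgroup.eq_top_of_card_eq T (by rw [hTcard, hcard'])
  -- N is normal
  have hNnormal : N.Normal := by
    rw [← Subgroup.normalizer_eq_top_iff]
    rw [← top_le_iff, ← htop]
    apply Subgroup.closure_le _ |>.mpr
    rintro x (rfl | rfl)
    · exact Subgroup.le_normalizer (Subgroup.mem_zpowers _)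
    · exact hAmem
  -- the quotient G/N is cyclic, generated by the image of A
  haveI hQcyc : IsCyclic (G ⧸ N) := by
    refine ⟨⟨QuotientGroup.mk A, ?_⟩⟩
    intro x
    obtain ⟨y, rfl⟩ := QuotientGroup.mk_surjective x
    have hy : y ∈ Subgroup.closure ({a, A} : Set G) := htop ▸ Subgroup.mem_top y
    induction hy using Subgroup.closure_induction with
    | mem z hz =>
      rcases hz with rfl | rfl
      · have : (QuotientGroup.mk z : G ⧸ N) = 1 := by
          rw [QuotientGroup.eq_one_iff]; exact Subgroup.mem_zpowers z
        rw [this]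
        exact Subgroup.one_mem (Subgroup.zpowers (QuotientGroup.mk A : G ⧸ N))
      · exact Subgroup.mem_zpowers _
    | one => exact Subgroup.one_mem (Subgroup.zpowers (QuotientGroup.mk A : G ⧸ N))
    | mul u v hu hv ihu ihv =>
      exact Subgroup.mul_mem (Subgroup.zpowers (QuotientGroup.mk A : G ⧸ N)) ihu ihv
    | inv u hu ihu =>
      exact Subgroup.inv_mem (Subgroup.zpowers (QuotientGroup.mk A : G ⧸ N)) ihu
  have hcardQ : Nat.card (G ⧸ N) = p := by
    have hlag := Subgroup.card_eq_card_quotient_mul_card_subgroup N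
    rw [hcard', hcardN] at hlag
    have h2 : Nat.card (G ⧸ N) * q = p * q := by rw [← hlag]; ring
    exact Nat.eq_of_mul_eq_mul_right hq h2
  -- the subgroup generated by g and h
  have hcomm : ∀ x ∈ ({g, h} : Set G), ∀ y ∈ ({g, h} : Set G), x * y = y * x := by
    rintro x (rfl | rfl) y (rfl | rfl) <;> first | rfl | exact hgh | exact hgh.symm
  set H : Subgroup G := Subgroup.closure {g, h} with hHdef
  letI : CommGroup H := Subgroup.closureCommGroupOfComm hcomm
  -- the map H → G/N and its kernel K = H ∩ N
  set f' : ↥H →* G ⧸ N := (QuotientGroup.mk' N).comp H.subtype with hf'def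
  set K : Subgroup ↥H := f'.ker with hKdef
  have hmemK : ∀ x : ↥H, x ∈ K ↔ (x : G) ∈ N := by
    intro x
    rw [hKdef, MonoidHom.mem_ker, hf'def]
    simp [QuotientGroup.eq_one_iff]
  -- K is cyclic, of cardinality dividing q
  have hKhom : ∃ f : K →* N, Function.Injective f := by
    refine ⟨{ toFun := fun x => ⟨(x : G), (hmemK _).mp x.2⟩, map_one' := rfl,
              map_mul' := fun x y => rfl }, ?_⟩
    intro x y hxy
    have h1 := congrArg Subtype.val hxy
    exact Subtype.ext (Subtype.ext h1)
  obtain ⟨f, hf⟩ := hKhom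
  haveI hKcyc : IsCyclic K := by
    haveI : IsCyclic ↥f.range := Subgroup.isCyclic f.range
    exact isCyclic_of_surjective (MonoidHom.ofInjective hf).symm
      (MonoidHom.ofInjective hf).symm.surjective
  have hKcard : Nat.card K ∣ q := by
    rw [← hcardN]
    exact Subgroup.card_dvd_of_injective f hf
  -- H/K embeds into G/N, so it is cyclic of cardinality dividing p
  have hι : Function.Injective (QuotientGroup.kerLift f') :=
    QuotientGroup.kerLift_injective f'
  haveI hHKcyc : IsCyclic (↥H ⧸ K) := by
    haveI : IsCyclic ↥(QuotientGroup.kerLift f').range :=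
      Subgroup.isCyclic (QuotientGroup.kerLift f').range
    exact isCyclic_of_surjective (MonoidHom.ofInjective hι).symm
      (MonoidHom.ofInjective hι).symm.surjective
  have hHKcard : Nat.card (↥H ⧸ K) ∣ p := by
    rw [← hcardQ]
    exact Subgroup.card_dvd_of_injective (QuotientGroup.kerLift f') hι
  -- H is cyclic via the exponent criterion
  have hcardH : Nat.card ↥H = Nat.card (↥H ⧸ K) * Nat.card K :=
    Subgroup.card_eq_card_quotient_mul_card_subgroup K
  have hcop : Nat.Coprime (Nat.card K) (Nat.card (↥H ⧸ K)) :=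
    Nat.Coprime.coprime_dvd_left hKcard (Nat.Coprime.coprime_dvd_right hHKcard hqp)
  have hexpK : Monoid.exponent K = Nat.card K := IsCyclic.exponent_eq_card
  have hexpHK : Monoid.exponent (↥H ⧸ K) = Nat.card (↥H ⧸ K) := IsCyclic.exponent_eq_card
  have hdvd1 : Nat.card K ∣ Monoid.exponent ↥H := by
    rw [← hexpK]
    exact Monoid.exponent_dvd_of_monoidHom K.subtype K.subtype_injective
  have hdvd2 : Nat.card (↥H ⧸ K) ∣ Monoid.exponent ↥H := by
    rw [← hexpHK]
    exact MonoidHom.exponent_dvd (f := QuotientGroup.mk' K) (QuotientGroup.mk'_surjective K)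
  have hdvd : Nat.card ↥H ∣ Monoid.exponent ↥H := by
    rw [hcardH, mul_comm]
    exact Nat.Coprime.mul_dvd_of_dvd_of_dvd hcop hdvd1 hdvd2
  have hexp : Monoid.exponent ↥H = Nat.card ↥H :=
    Nat.dvd_antisymm Group.exponent_dvd_nat_card hdvd
  haveI hHcyc : IsCyclic ↥H := IsCyclic.of_exponent_eq_card hexp
  exact ⟨H, hHcyc, Subgroup.subset_closure (by simp), Subgroup.subset_closure (by simp)⟩
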